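/- Let V be an n-dimensional real inner product space and H a symmetric endomorphism of V. Define J(H) on the k-th exterior power Λ^k V* by J(H)(α₁∧…∧α_k) = Σ_{i=1}^k α₁∧…∧(α_i ∘ H)∧…∧α_k. Then J(H) composed with the Hodge star ⋆ satisfies ⋆∘J(H) + J(H)∘⋆ = Tr(H)·⋆ (as operators from Λ^k V* to Λ^{n-k} V*). -/

import Mathlib

open scoped BigOperators

noncomputable section

variable {V : Type*} [NormedAddCommGroup V] [InnerProductSpace ℝ V]

/-- Wedge product of real-valued alternating forms, via `domCoprod`. -/
def wedgeForm {k l : ℕ} (ω : V [⋀^Fin k]→ₗ[ℝ] ℝ) (η : V [⋀^Fin l]→ₗ[ℝ] ℝ) :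
    V [⋀^Fin (k + l)]→ₗ[ℝ] ℝ :=
  ((TensorProduct.lid ℝ ℝ).toLinearMap.compAlternatingMap
    (ω.domCoprod η)).domDomCongr finSumFinEquiv

/-- The inner product on `k`-forms induced by an orthonormal basis `b` of `V`:
`⟨ω,η⟩ = (1/k!) Σ_f ω(b∘f)·η(b∘f)`. -/
def formInner {n k : ℕ} (b : OrthonormalBasis (Fin n) ℝ V)
    (ω η : V [⋀^Fin k]→ₗ[ℝ] ℝ) : ℝ :=
  (k.factorial : ℝ)⁻¹ *
    ∑ f : Fin k → Fin n, ω (fun i => b (f i)) * η (fun i => b (f i))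

namespace HodgeAux

open scoped TensorProduct
set_option synthInstance.maxHeartbeats 1000000
set_option maxHeartbeats 2000000

variable {N : Type*} [AddCommGroup N] [Module ℝ N]
variable (H : V →ₗ[ℝ] V)

/-! ### The derivation operator on multilinear maps -/

def Dm {ι : Type*} [Fintype ι] [DecidableEq ι]
    (m : MultilinearMap ℝ (fun _ : ι => V) N) : MultilinearMap ℝ (fun _ : ι => V) N :=
  ∑ i : ι, m.compLinearMap (fun j => if j = i then H else LinearMap.id)

theorem Dm_apply {ι : Type*} [Fintype ι] [DecidableEq ι]
    (m : MultilinearMap ℝ (fun _ : ι => V) N) (v : ι → V) :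
    Dm H m v = ∑ i : ι, m (Function.update v i (H (v i))) := by
  rw [Dm, MultilinearMap.sum_apply]
  refine Finset.sum_congr rfl fun i _ => ?_
  rw [MultilinearMap.compLinearMap_apply]
  congr 1
  funext j
  by_cases h : j = i
  · subst h; simp
  · simp [h, Function.update_of_ne h]

theorem Dm_domDomCongr {ι ι' : Type*} [Fintype ι] [DecidableEq ι]
    [Fintype ι'] [DecidableEq ι'] (σ : ι ≃ ι')
    (m : MultilinearMap ℝ (fun _ : ι => V) N) :
    Dm H (MultilinearMap.domDomCongr σ m) =
      MultilinearMap.domDomCongr σ (Dm H m) := by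
  ext v
  rw [Dm_apply, MultilinearMap.domDomCongr_apply, Dm_apply]
  refine Fintype.sum_equiv σ.symm _ _ fun i' => ?_
  rw [MultilinearMap.domDomCongr_apply]
  have h1 : Function.update v i' (H (v i')) ∘ σ
      = Function.update (v ∘ σ) (σ.symm i') (H (v i')) :=
    Function.update_comp_equiv v σ i' (H (v i'))
  have h2 : v (σ (σ.symm i')) = v i' := by rw [Equiv.apply_symm_apply]
  rw [h2]
  exact congrArg m h1

theorem Dm_alternatization {ι : Type*} [Fintype ι] [DecidableEq ι]
    (m : MultilinearMap ℝ (fun _ : ι => V) N) :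
    Dm H (MultilinearMap.alternatization m : MultilinearMap ℝ (fun _ : ι => V) N) =
      (MultilinearMap.alternatization (Dm H m) : MultilinearMap ℝ (fun _ : ι => V) N) := by
  ext v
  rw [Dm_apply]
  simp only [AlternatingMap.coe_multilinearMap]
  rw [MultilinearMap.alternatization_apply]
  simp_rw [MultilinearMap.alternatization_apply]
  rw [Finset.sum_comm]
  refine Finset.sum_congr rfl fun σ _ => ?_
  rw [← Finset.smul_sum]
  congr 1
  have h := congrFun (congrArg DFunLike.coe (Dm_domDomCongr H (σ : ι ≃ ι) m)) v
  rw [Dm_apply] at h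
  exact h

theorem Dm_domCoprod {ιa ιb : Type*} [Fintype ιa] [DecidableEq ιa] [Fintype ιb] [DecidableEq ιb]
    {N₁ N₂ : Type*} [AddCommGroup N₁] [Module ℝ N₁] [AddCommGroup N₂] [Module ℝ N₂]
    (a : MultilinearMap ℝ (fun _ : ιa => V) N₁) (b : MultilinearMap ℝ (fun _ : ιb => V) N₂) :
    Dm H (MultilinearMap.domCoprod a b) =
      MultilinearMap.domCoprod (Dm H a) b + MultilinearMap.domCoprod a (Dm H b) := by
  ext v
  rw [Dm_apply, MultilinearMap.add_apply, MultilinearMap.domCoprod_apply,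
    MultilinearMap.domCoprod_apply, Fintype.sum_sum_type]
  have hl : ∀ (ia : ιa) (x : V),
      (fun i => Function.update v (Sum.inl ia) x (Sum.inl i)) =
        Function.update (fun j => v (Sum.inl j)) ia x := by
    intro ia x; funext i
    by_cases h : i = ia
    · subst h; simp
    · rw [Function.update_of_ne (fun hc => h (Sum.inl.inj hc)), Function.update_of_ne h]
  have hl' : ∀ (ia : ιa) (x : V),
      (fun i => Function.update v (Sum.inl ia) x (Sum.inr i)) = fun j => v (Sum.inr j) := by
    intro ia x; funext i; rw [Function.update_of_ne (by simp)]
  have hr : ∀ (ib : ιb) (x : V),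
      (fun i => Function.update v (Sum.inr ib) x (Sum.inr i)) =
        Function.update (fun j => v (Sum.inr j)) ib x := by
    intro ib x; funext i
    by_cases h : i = ib
    · subst h; simp
    · rw [Function.update_of_ne (fun hc => h (Sum.inr.inj hc)), Function.update_of_ne h]
  have hr' : ∀ (ib : ιb) (x : V),
      (fun i => Function.update v (Sum.inr ib) x (Sum.inl i)) = fun j => v (Sum.inl j) := by
    intro ib x; funext i; rw [Function.update_of_ne (by simp)]
  simp_rw [MultilinearMap.domCoprod_apply, hl, hl', hr, hr']
  rw [← TensorProduct.sum_tmul, ← TensorProduct.tmul_sum, Dm_apply, Dm_apply]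

theorem Dm_nsmul {ι : Type*} [Fintype ι] [DecidableEq ι] (c : ℕ)
    (m : MultilinearMap ℝ (fun _ : ι => V) N) :
    Dm H (c • m) = c • Dm H m := by
  ext v
  rw [Dm_apply, MultilinearMap.smul_apply, Dm_apply, Finset.smul_sum]
  simp [MultilinearMap.smul_apply]

theorem Dm_coe_domCoprod {k l : ℕ}
    (a : V [⋀^Fin k]→ₗ[ℝ] ℝ) (b : V [⋀^Fin l]→ₗ[ℝ] ℝ)
    (Ja : V [⋀^Fin k]→ₗ[ℝ] ℝ) (Jb : V [⋀^Fin l]→ₗ[ℝ] ℝ)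
    (ha : Dm H ↑a = (Ja : MultilinearMap ℝ (fun _ : Fin k => V) ℝ))
    (hb : Dm H ↑b = (Jb : MultilinearMap ℝ (fun _ : Fin l => V) ℝ)) :
    Dm H (↑(a.domCoprod b) :
        MultilinearMap ℝ (fun _ : Fin k ⊕ Fin l => V) (ℝ ⊗[ℝ] ℝ)) =
      ↑(Ja.domCoprod b) + ↑(a.domCoprod Jb) := by
  classical
  have key := MultilinearMap.domCoprod_alternization_eq a b
  have key1 := MultilinearMap.domCoprod_alternization_eq Ja b
  have key2 := MultilinearMap.domCoprod_alternization_eq a Jb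
  simp only [Fintype.card_fin] at key key1 key2
  set c : ℕ := k.factorial * l.factorial with hc
  have hDm : Dm H (↑(MultilinearMap.alternatization
        (MultilinearMap.domCoprod (a : MultilinearMap ℝ (fun _ : Fin k => V) ℝ)
          (b : MultilinearMap ℝ (fun _ : Fin l => V) ℝ))) :
      MultilinearMap ℝ (fun _ : Fin k ⊕ Fin l => V) (ℝ ⊗[ℝ] ℝ)) =
      Dm H (↑(c • a.domCoprod b)) := by rw [key]
  rw [Dm_alternatization, Dm_domCoprod, ha, hb, map_add, AlternatingMap.coe_add,
    key1, key2, AlternatingMap.coe_smul, AlternatingMap.coe_smul, AlternatingMap.coe_smul,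
    Dm_nsmul] at hDm
  have c_ne : ((c : ℕ) : ℝ) ≠ 0 := by
    simp [hc, Nat.factorial_ne_zero]
  apply smul_right_injective
    (MultilinearMap ℝ (fun _ : Fin k ⊕ Fin l => V) (ℝ ⊗[ℝ] ℝ)) c_ne
  show ((c : ℝ) • Dm H (↑(a.domCoprod b) :
      MultilinearMap ℝ (fun _ : Fin k ⊕ Fin l => V) (ℝ ⊗[ℝ] ℝ))) =
    (c : ℝ) • (↑(Ja.domCoprod b) + ↑(a.domCoprod Jb))
  rw [Nat.cast_smul_eq_nsmul, smul_add, Nat.cast_smul_eq_nsmul, Nat.cast_smul_eq_nsmul,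
    ← hDm]

theorem wedgeForm_apply {k l : ℕ} (a : V [⋀^Fin k]→ₗ[ℝ] ℝ) (b : V [⋀^Fin l]→ₗ[ℝ] ℝ)
    (u : Fin (k + l) → V) :
    wedgeForm a b u = TensorProduct.lid ℝ ℝ ((a.domCoprod b) (u ∘ finSumFinEquiv)) := rfl

theorem wedge_leibniz {k l : ℕ}
    (a : V [⋀^Fin k]→ₗ[ℝ] ℝ) (b : V [⋀^Fin l]→ₗ[ℝ] ℝ)
    (Ja : V [⋀^Fin k]→ₗ[ℝ] ℝ) (Jb : V [⋀^Fin l]→ₗ[ℝ] ℝ)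
    (ha : ∀ u : Fin k → V, Ja u = ∑ i : Fin k, a (Function.update u i (H (u i))))
    (hb : ∀ u : Fin l → V, Jb u = ∑ i : Fin l, b (Function.update u i (H (u i))))
    (v : Fin (k + l) → V) :
    ∑ i : Fin (k + l), wedgeForm a b (Function.update v i (H (v i)))
      = wedgeForm Ja b v + wedgeForm a Jb v := by
  classical
  have hma : Dm H ↑a = (Ja : MultilinearMap ℝ (fun _ : Fin k => V) ℝ) :=
    MultilinearMap.ext fun u => by
      rw [Dm_apply]; exact (ha u).symm
  have hmb : Dm H ↑b = (Jb : MultilinearMap ℝ (fun _ : Fin l => V) ℝ) :=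
    MultilinearMap.ext fun u => by
      rw [Dm_apply]; exact (hb u).symm
  have key := Dm_coe_domCoprod H a b Ja Jb hma hmb
  have step : ∀ i : Fin (k + l), wedgeForm a b (Function.update v i (H (v i)))
      = TensorProduct.lid ℝ ℝ ((a.domCoprod b)
          (Function.update (v ∘ finSumFinEquiv) (finSumFinEquiv.symm i) (H (v i)))) := by
    intro i
    rw [wedgeForm_apply]
    congr 1
    exact congrArg _ (Function.update_comp_equiv v finSumFinEquiv i (H (v i)))
  calc ∑ i : Fin (k + l), wedgeForm a b (Function.update v i (H (v i)))
      = ∑ j : Fin k ⊕ Fin l, TensorProduct.lid ℝ ℝ ((a.domCoprod b)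
          (Function.update (v ∘ finSumFinEquiv) j (H ((v ∘ finSumFinEquiv) j)))) := by
        rw [Finset.sum_congr rfl (fun i _ => step i)]
        refine (Fintype.sum_equiv finSumFinEquiv _ _ fun j => ?_).symm
        simp only [Equiv.symm_apply_apply, Function.comp_apply]
    _ = TensorProduct.lid ℝ ℝ (Dm H (↑(a.domCoprod b) :
          MultilinearMap ℝ (fun _ : Fin k ⊕ Fin l => V) (ℝ ⊗[ℝ] ℝ)) (v ∘ finSumFinEquiv)) := by
        rw [Dm_apply, map_sum]
        rfl
    _ = wedgeForm Ja b v + wedgeForm a Jb v := by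
        rw [key, MultilinearMap.add_apply, map_add, wedgeForm_apply, wedgeForm_apply]
        rfl

/-! ### The derivation preserves alternating maps; top-degree action -/

def Dalt {ι : Type*} [Fintype ι] [DecidableEq ι] (τ : V [⋀^ι]→ₗ[ℝ] ℝ) : V [⋀^ι]→ₗ[ℝ] ℝ :=
  { Dm H (τ : MultilinearMap ℝ (fun _ : ι => V) ℝ) with
    map_eq_zero_of_eq' := fun u i j hu hij => by
      have : Dm H (τ : MultilinearMap ℝ (fun _ : ι => V) ℝ) u = 0 := by
        rw [Dm_apply]
        have hzero : ∀ x ∈ Finset.univ, x ∉ ({i, j} : Finset ι) →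
            τ (Function.update u x (H (u x))) = 0 := by
          intro x _ hx
          simp only [Finset.mem_insert, Finset.mem_singleton, not_or] at hx
          refine τ.map_eq_zero_of_eq _ (i := i) (j := j) ?_ hij
          rw [Function.update_of_ne (fun h => hx.1 h.symm),
            Function.update_of_ne (fun h => hx.2 h.symm)]
          exact hu
        simp only [AlternatingMap.coe_multilinearMap]
        rw [← Finset.sum_subset (Finset.subset_univ ({i, j} : Finset ι)) hzero,
          Finset.sum_pair hij]
        have hswap : Function.update u i (H (u i))
            = (Function.update u j (H (u j))) ∘ Equiv.swap i j := by
          funext l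
          rcases eq_or_ne l i with rfl | hli
          · rw [Function.comp_apply, Equiv.swap_apply_left, Function.update_self,
              Function.update_self, hu]
          · rcases eq_or_ne l j with rfl | hlj
            · rw [Function.comp_apply, Equiv.swap_apply_right, Function.update_of_ne hli,
                Function.update_of_ne hij]
              exact hu.symm
            · rw [Function.comp_apply, Equiv.swap_apply_of_ne_of_ne hli hlj,
                Function.update_of_ne hli, Function.update_of_ne hlj]
        rw [hswap, AlternatingMap.map_swap τ _ hij, neg_add_cancel]
      exact this }

theorem Dalt_apply {ι : Type*} [Fintype ι] [DecidableEq ι] (τ : V [⋀^ι]→ₗ[ℝ] ℝ) (u : ι → V) :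
    Dalt H τ u = ∑ i : ι, τ (Function.update u i (H (u i))) := Dm_apply H _ u

theorem map_update_basis {m n : ℕ} (b : OrthonormalBasis (Fin n) ℝ V)
    (ω : V [⋀^Fin m]→ₗ[ℝ] ℝ) (u : Fin m → V) (i : Fin m) (x : V) :
    ω (Function.update u i x)
      = ∑ j : Fin n, (inner ℝ (b j) x : ℝ) * ω (Function.update u i (b j)) := by
  conv_lhs => rw [← b.sum_repr' x]
  rw [show ω (Function.update u i (∑ j : Fin n, (inner ℝ (b j) x : ℝ) • b j))
      = ω.toMultilinearMap (Function.update u i (∑ j : Fin n, (inner ℝ (b j) x : ℝ) • b j)) from rfl,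
    MultilinearMap.map_update_sum]
  refine Finset.sum_congr rfl fun j _ => ?_
  rw [MultilinearMap.map_update_smul]
  rfl

theorem trace_eq_sum_inner {n : ℕ} (b : OrthonormalBasis (Fin n) ℝ V) :
    LinearMap.trace ℝ V H = ∑ i : Fin n, (inner ℝ (b i) (H (b i)) : ℝ) := by
  classical
  rw [LinearMap.trace_eq_matrix_trace ℝ b.toBasis H, Matrix.trace]
  refine Finset.sum_congr rfl fun i _ => ?_
  rw [Matrix.diag_apply, LinearMap.toMatrix_apply]
  simp [OrthonormalBasis.coe_toBasis_repr_apply, OrthonormalBasis.repr_apply_apply,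
    OrthonormalBasis.coe_toBasis]

theorem top_form_derivation {n : ℕ} (b : OrthonormalBasis (Fin n) ℝ V)
    (τ : V [⋀^Fin n]→ₗ[ℝ] ℝ) (v : Fin n → V) :
    ∑ i : Fin n, τ (Function.update v i (H (v i)))
      = LinearMap.trace ℝ V H * τ v := by
  classical
  let A : V [⋀^Fin n]→ₗ[ℝ] ℝ := Dalt H τ
  have hA : ∀ u, A u = ∑ i : Fin n, τ (Function.update u i (H (u i))) := Dalt_apply H τ
  have hbb : ⇑b.toBasis = ⇑b := b.coe_toBasis
  have h1 : A = A ⇑b • b.toBasis.det := by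
    have := AlternatingMap.eq_smul_basis_det b.toBasis A
    rwa [hbb] at this
  have h2 : τ = τ ⇑b • b.toBasis.det := by
    have := AlternatingMap.eq_smul_basis_det b.toBasis τ
    rwa [hbb] at this
  have h3 : A ⇑b = LinearMap.trace ℝ V H * τ ⇑b := by
    rw [hA, trace_eq_sum_inner H b, Finset.sum_mul]
    refine Finset.sum_congr rfl fun i _ => ?_
    rw [map_update_basis b τ _ i (H (b i))]
    rw [Finset.sum_eq_single i]
    · rw [Function.update_eq_self]
    · intro j _ hji
      have hz : τ (Function.update (⇑b) i (b j)) = 0 := by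
        refine τ.map_eq_zero_of_eq _ (i := i) (j := j) ?_ (fun h => hji (h ▸ rfl))
        rw [Function.update_self, Function.update_of_ne hji]
      rw [hz, mul_zero]
    · intro h; exact absurd (Finset.mem_univ i) h
  have hAt : A = LinearMap.trace ℝ V H • τ := by
    rw [h1, h3, mul_comm, ← smul_smul, smul_comm, ← h2]
  have := congrFun (congrArg DFunLike.coe hAt) v
  rw [hA] at this
  rw [this, AlternatingMap.smul_apply, smul_eq_mul]

/-! ### Symmetry of the derivation with respect to `formInner` -/

theorem update_comp_basis {k n : ℕ} (b : OrthonormalBasis (Fin n) ℝ V)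
    (f : Fin k → Fin n) (i : Fin k) (j : Fin n) :
    Function.update (fun l => b (f l)) i (b j) = fun l => b (Function.update f i j l) := by
  funext l
  rcases eq_or_ne l i with rfl | hl
  · rw [Function.update_self, Function.update_self]
  · rw [Function.update_of_ne hl, Function.update_of_ne hl]

theorem formInner_J_symm {n k : ℕ} (b : OrthonormalBasis (Fin n) ℝ V)
    (hH : LinearMap.IsSymmetric H)
    (ω η Jω Jη : V [⋀^Fin k]→ₗ[ℝ] ℝ)
    (hJω : ∀ v : Fin k → V, Jω v = ∑ i : Fin k, ω (Function.update v i (H (v i))))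
    (hJη : ∀ v : Fin k → V, Jη v = ∑ i : Fin k, η (Function.update v i (H (v i)))) :
    formInner b Jω η = formInner b ω Jη := by
  classical
  have hxy : ∀ x y : V, (inner ℝ x (H y) : ℝ) = (inner ℝ y (H x) : ℝ) := fun x y => by
    rw [← hH x y, real_inner_comm]
  unfold formInner
  congr 1
  have lhs_eq : ∀ (α β γ : V [⋀^Fin k]→ₗ[ℝ] ℝ)
      (_ : ∀ v : Fin k → V, α v = ∑ i : Fin k, β (Function.update v i (H (v i)))),
      ∑ f : Fin k → Fin n, α (fun l => b (f l)) * γ (fun l => b (f l))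
        = ∑ i : Fin k, ∑ p : (Fin k → Fin n) × Fin n,
            (inner ℝ (b p.2) (H (b (p.1 i))) : ℝ)
              * β (fun l => b (Function.update p.1 i p.2 l)) * γ (fun l => b (p.1 l)) := by
    intro α β γ hJ
    have step1 : ∑ f : Fin k → Fin n, α (fun l => b (f l)) * γ (fun l => b (f l))
        = ∑ f : Fin k → Fin n, ∑ i : Fin k, ∑ j : Fin n,
            (inner ℝ (b j) (H (b (f i))) : ℝ)
              * β (fun l => b (Function.update f i j l)) * γ (fun l => b (f l)) := by
      refine Finset.sum_congr rfl fun f _ => ?_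
      rw [hJ, Finset.sum_mul]
      refine Finset.sum_congr rfl fun i _ => ?_
      rw [show β (Function.update (fun l => b (f l)) i (H ((fun l => b (f l)) i)))
            = β (Function.update (fun l => b (f l)) i (H (b (f i)))) from rfl]
      rw [map_update_basis b β _ i (H (b (f i))), Finset.sum_mul]
      refine Finset.sum_congr rfl fun j _ => ?_
      rw [update_comp_basis b f i j]
    rw [step1, Finset.sum_comm]
    refine Finset.sum_congr rfl fun i _ => ?_
    rw [Fintype.sum_prod_type]
  rw [lhs_eq Jω ω η hJω]
  have rhs_eq : ∑ f : Fin k → Fin n, ω (fun l => b (f l)) * Jη (fun l => b (f l))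
      = ∑ i : Fin k, ∑ p : (Fin k → Fin n) × Fin n,
          (inner ℝ (b p.2) (H (b (p.1 i))) : ℝ)
            * η (fun l => b (Function.update p.1 i p.2 l)) * ω (fun l => b (p.1 l)) := by
    have := lhs_eq Jη η ω hJη
    rw [← this]
    refine Finset.sum_congr rfl fun f _ => ?_
    ring
  rw [rhs_eq]
  refine Finset.sum_congr rfl fun i _ => ?_
  have inv : Function.Involutive
      (fun p : (Fin k → Fin n) × Fin n => (Function.update p.1 i p.2, p.1 i)) := by
    rintro ⟨f, j⟩
    refine Prod.ext ?_ ?_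
    · simp [Function.update_idem]
    · simp
  let e := inv.toPerm
  have he : ∀ p : (Fin k → Fin n) × Fin n, e p = (Function.update p.1 i p.2, p.1 i) :=
    fun _ => rfl
  rw [← Equiv.sum_comp e (fun p : (Fin k → Fin n) × Fin n =>
    (inner ℝ (b p.2) (H (b (p.1 i))) : ℝ)
      * η (fun l => b (Function.update p.1 i p.2 l)) * ω (fun l => b (p.1 l)))]
  refine Finset.sum_congr rfl fun p _ => ?_
  obtain ⟨f, j⟩ := p
  rw [he]
  simp only [Function.update_self, Function.update_idem, Function.update_eq_self]
  rw [hxy (b (f i)) (b j)]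
  ring

/-! ### Nondegeneracy machinery -/

theorem exists_sorted {n m : ℕ} (v : Fin m → Fin n) (hv : Function.Injective v) :
    ∃ (s : Finset (Fin n)) (hs : s.card = m) (π : Equiv.Perm (Fin m)),
      ∀ i, v i = (s.orderIsoOfFin hs (π i) : Fin n) := by
  classical
  set s := Finset.image v Finset.univ with hsdef
  have hs : s.card = m := by
    rw [hsdef, Finset.card_image_of_injective _ hv, Finset.card_univ, Fintype.card_fin]
  have hmem : ∀ i, v i ∈ s := fun i => Finset.mem_image_of_mem v (Finset.mem_univ i)
  have hφ : Function.Injective (fun i => (s.orderIsoOfFin hs).symm ⟨v i, hmem i⟩) := by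
    intro a c hac
    have h2 := congrArg (s.orderIsoOfFin hs) hac
    simp only [OrderIso.apply_symm_apply] at h2
    exact hv (Subtype.mk_eq_mk.mp h2)
  refine ⟨s, hs, Equiv.ofBijective _ (Finite.injective_iff_bijective.mp hφ), fun i => ?_⟩
  show v i = ((s.orderIsoOfFin hs) ((s.orderIsoOfFin hs).symm ⟨v i, hmem i⟩) : Fin n)
  rw [OrderIso.apply_symm_apply]

theorem eq_zero_of_vanish {n m : ℕ} (b : OrthonormalBasis (Fin n) ℝ V)
    (ω : V [⋀^Fin m]→ₗ[ℝ] ℝ)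
    (h : ∀ (s : Finset (Fin n)) (hs : s.card = m),
      ω (fun i => b ((s.orderIsoOfFin hs i : Fin n))) = 0) : ω = 0 := by
  classical
  refine Module.Basis.ext_alternating b.toBasis fun v hv => ?_
  obtain ⟨s, hs, π, hπ⟩ := exists_sorted v hv
  have hcomp : (fun i => b.toBasis (v i))
      = (fun i => b ((s.orderIsoOfFin hs i : Fin n))) ∘ π := by
    funext i
    simp only [OrthonormalBasis.coe_toBasis, Function.comp_apply, hπ i]
  rw [hcomp, AlternatingMap.map_perm, h s hs, smul_zero]
  simp

theorem eq_zero_of_vanish_all {n m : ℕ} (b : OrthonormalBasis (Fin n) ℝ V)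
    (ω : V [⋀^Fin m]→ₗ[ℝ] ℝ)
    (h : ∀ f : Fin m → Fin n, ω (fun i => b (f i)) = 0) : ω = 0 :=
  eq_zero_of_vanish b ω fun s hs => h _

theorem formInner_self_eq_zero {n m : ℕ} (b : OrthonormalBasis (Fin n) ℝ V)
    (ω : V [⋀^Fin m]→ₗ[ℝ] ℝ) (h : formInner b ω ω = 0) : ω = 0 := by
  classical
  unfold formInner at h
  rcases mul_eq_zero.mp h with h' | h'
  · exact absurd h' (by positivity)
  · refine eq_zero_of_vanish_all b ω fun f => ?_
    have hnn : ∀ g : Fin m → Fin n, g ∈ Finset.univ →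
        (0:ℝ) ≤ ω (fun i => b (g i)) * ω (fun i => b (g i)) :=
      fun g _ => mul_self_nonneg _
    have := (Finset.sum_eq_zero_iff_of_nonneg hnn).mp h' f (Finset.mem_univ f)
    exact mul_self_eq_zero.mp this

theorem altSum_apply {α : Type*} {m : ℕ} (t : Finset α) (g : α → (V [⋀^Fin m]→ₗ[ℝ] ℝ))
    (v : Fin m → V) : (∑ a ∈ t, g a) v = ∑ a ∈ t, g a v := by
  classical
  induction t using Finset.induction_on with
  | empty => simp
  | insert _ _ hnot ih =>
    rw [Finset.sum_insert hnot, Finset.sum_insert hnot, AlternatingMap.add_apply, ih]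

def evalMap {n : ℕ} (b : OrthonormalBasis (Fin n) ℝ V) (m : ℕ) :
    (V [⋀^Fin m]→ₗ[ℝ] ℝ) →ₗ[ℝ] ({s : Finset (Fin n) // s.card = m} → ℝ) where
  toFun ω := fun s => ω (fun i => b ((s.1.orderIsoOfFin s.2 i : Fin n)))
  map_add' _ _ := rfl
  map_smul' _ _ := rfl

theorem evalMap_injective {n : ℕ} (b : OrthonormalBasis (Fin n) ℝ V) (m : ℕ) :
    Function.Injective (evalMap (V := V) b m) := by
  rw [injective_iff_map_eq_zero]
  intro ω hω
  refine eq_zero_of_vanish b ω fun s hs => ?_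
  exact congrFun hω ⟨s, hs⟩

theorem formsFinDim {n m : ℕ} (b : OrthonormalBasis (Fin n) ℝ V) :
    FiniteDimensional ℝ (V [⋀^Fin m]→ₗ[ℝ] ℝ) :=
  FiniteDimensional.of_injective (evalMap b m) (evalMap_injective b m)

def minor {n : ℕ} (b : OrthonormalBasis (Fin n) ℝ V) {m : ℕ}
    (s : {s : Finset (Fin n) // s.card = m}) : V [⋀^Fin m]→ₗ[ℝ] ℝ :=
  (Matrix.detRowAlternating (R := ℝ) (n := Fin m)).compLinearMap
    (LinearMap.pi (fun j => b.toBasis.coord ((s.1.orderIsoOfFin s.2 j : Fin n))))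

theorem minor_apply_tuple {n m : ℕ} (b : OrthonormalBasis (Fin n) ℝ V)
    (s t : {s : Finset (Fin n) // s.card = m}) :
    minor b s (fun i => b ((t.1.orderIsoOfFin t.2 i : Fin n)))
      = if s = t then 1 else 0 := by
  classical
  have hentry : ∀ i j : Fin m,
      b.toBasis.coord ((s.1.orderIsoOfFin s.2 j : Fin n)) (b ((t.1.orderIsoOfFin t.2 i : Fin n)))
        = if (t.1.orderIsoOfFin t.2 i : Fin n) = (s.1.orderIsoOfFin s.2 j : Fin n)
            then 1 else 0 := by
    intro i j
    rw [show b ((t.1.orderIsoOfFin t.2 i : Fin n)) = b.toBasis ((t.1.orderIsoOfFin t.2 i : Fin n))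
      from (OrthonormalBasis.coe_toBasis b).symm ▸ rfl]
    rw [Module.Basis.coord_apply, Module.Basis.repr_self, Finsupp.single_apply]
  have hdet : minor b s (fun i => b ((t.1.orderIsoOfFin t.2 i : Fin n)))
      = Matrix.det (Matrix.of fun i j =>
          if (t.1.orderIsoOfFin t.2 i : Fin n) = (s.1.orderIsoOfFin s.2 j : Fin n)
            then (1 : ℝ) else 0) := by
    rw [minor, AlternatingMap.compLinearMap_apply]
    unfold Matrix.detRowAlternating
    congr 1
    funext i
    funext j
    simp only [LinearMap.pi_apply, Matrix.of_apply]
    exact hentry i j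
  rw [hdet]
  by_cases hst : s = t
  · subst hst
    rw [if_pos rfl]
    have hmat : (Matrix.of fun i j =>
        if (s.1.orderIsoOfFin s.2 i : Fin n) = (s.1.orderIsoOfFin s.2 j : Fin n)
          then (1 : ℝ) else 0) = 1 := by
      ext i j
      by_cases hij : i = j
      · subst hij; simp
      · have : (s.1.orderIsoOfFin s.2 i : Fin n) ≠ (s.1.orderIsoOfFin s.2 j : Fin n) := by
          intro hc
          exact hij ((s.1.orderIsoOfFin s.2).injective (Subtype.ext hc))
        simp [this, Matrix.one_apply, hij]
    rw [hmat, Matrix.det_one]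
  · rw [if_neg hst]
    have hnot : ¬ (t.1 ⊆ s.1) := by
      intro hsub
      exact hst (Subtype.ext ((Finset.eq_of_subset_of_card_le hsub (by rw [s.2, t.2])).symm))
    obtain ⟨x, hxt, hxs⟩ := Finset.not_subset.mp hnot
    obtain ⟨i₀, hi₀⟩ : ∃ i₀, (t.1.orderIsoOfFin t.2 i₀ : Fin n) = x := by
      refine ⟨(t.1.orderIsoOfFin t.2).symm ⟨x, hxt⟩, ?_⟩
      rw [OrderIso.apply_symm_apply]
    refine Matrix.det_eq_zero_of_row_eq_zero i₀ fun j => ?_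
    simp only [Matrix.of_apply]
    rw [if_neg]
    intro hc
    rw [hi₀] at hc
    exact hxs (hc ▸ (s.1.orderIsoOfFin s.2 j).2)

theorem minor_linearIndependent {n m : ℕ} (b : OrthonormalBasis (Fin n) ℝ V) :
    LinearIndependent ℝ (minor (V := V) b (m := m)) := by
  classical
  rw [Fintype.linearIndependent_iff]
  intro g hg t
  have := congrFun (congrArg DFunLike.coe hg) (fun i => b ((t.1.orderIsoOfFin t.2 i : Fin n)))
  rw [altSum_apply] at this
  simp only [AlternatingMap.smul_apply, smul_eq_mul, AlternatingMap.zero_apply] at this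
  rw [Finset.sum_eq_single t (fun s _ hst => by rw [minor_apply_tuple, if_neg hst, mul_zero])
    (fun h => absurd (Finset.mem_univ t) h)] at this
  rw [minor_apply_tuple, if_pos rfl, mul_one] at this
  exact this

theorem finrank_forms {n : ℕ} (b : OrthonormalBasis (Fin n) ℝ V) (m : ℕ) :
    Module.finrank ℝ (V [⋀^Fin m]→ₗ[ℝ] ℝ) = n.choose m := by
  classical
  refine le_antisymm ?_ ?_
  · calc Module.finrank ℝ (V [⋀^Fin m]→ₗ[ℝ] ℝ)
        ≤ Module.finrank ℝ ({s : Finset (Fin n) // s.card = m} → ℝ) :=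
          LinearMap.finrank_le_finrank_of_injective (evalMap_injective b m)
      _ = Fintype.card {s : Finset (Fin n) // s.card = m} := Module.finrank_pi ℝ
      _ = n.choose m := by rw [Fintype.card_finset_len, Fintype.card_fin]
  · haveI := formsFinDim (n := n) (m := m) b
    have h := (minor_linearIndependent (V := V) b (m := m)).fintype_card_le_finrank
    rwa [Fintype.card_finset_len, Fintype.card_fin] at h

/-! ### Linearity of the wedge in the second argument -/

theorem wedge_add_right {k l : ℕ} (ω : V [⋀^Fin k]→ₗ[ℝ] ℝ) (ξ₁ ξ₂ : V [⋀^Fin l]→ₗ[ℝ] ℝ) :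
    wedgeForm ω (ξ₁ + ξ₂) = wedgeForm ω ξ₁ + wedgeForm ω ξ₂ := by
  have h : ω.domCoprod (ξ₁ + ξ₂) = ω.domCoprod ξ₁ + ω.domCoprod ξ₂ := by
    rw [← AlternatingMap.domCoprod'_apply, ← AlternatingMap.domCoprod'_apply,
      ← AlternatingMap.domCoprod'_apply, ← map_add, ← TensorProduct.tmul_add]
  rw [wedgeForm, wedgeForm, wedgeForm, h, LinearMap.compAlternatingMap_add,
    AlternatingMap.domDomCongr_add]

theorem wedge_smul_right {k l : ℕ} (c : ℝ) (ω : V [⋀^Fin k]→ₗ[ℝ] ℝ)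
    (ξ : V [⋀^Fin l]→ₗ[ℝ] ℝ) :
    wedgeForm ω (c • ξ) = c • wedgeForm ω ξ := by
  have h : ω.domCoprod (c • ξ) = c • ω.domCoprod ξ := by
    rw [← AlternatingMap.domCoprod'_apply, ← AlternatingMap.domCoprod'_apply,
      TensorProduct.tmul_smul, map_smul]
  rw [wedgeForm, wedgeForm, h, LinearMap.compAlternatingMap_smul,
    AlternatingMap.domDomCongr_smul]

theorem wedge_zero_right {k l : ℕ} (ω : V [⋀^Fin k]→ₗ[ℝ] ℝ) :
    wedgeForm ω (0 : V [⋀^Fin l]→ₗ[ℝ] ℝ) = 0 := by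
  have h : ω.domCoprod (0 : V [⋀^Fin l]→ₗ[ℝ] ℝ) = 0 := by
    rw [← AlternatingMap.domCoprod'_apply, TensorProduct.tmul_zero, map_zero]
  rw [wedgeForm, h, LinearMap.compAlternatingMap_zero, AlternatingMap.domDomCongr_zero]

/-! ### Reindexing sums of updates through `domDomCongr` -/

theorem sum_update_domDomCongr {m n' : ℕ} (τ : V [⋀^Fin m]→ₗ[ℝ] ℝ) (e : Fin m ≃ Fin n')
    (v : Fin n' → V) :
    ∑ i' : Fin n', (τ.domDomCongr e) (Function.update v i' (H (v i')))
      = ∑ i : Fin m, τ (Function.update (v ∘ e) i (H ((v ∘ e) i))) := by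
  refine (Fintype.sum_equiv e _ _ fun i => ?_).symm
  have hcomp : (Function.update v (e i) (H (v (e i)))) ∘ e
      = Function.update (v ∘ e) i (H (v (e i))) := by
    have := Function.update_comp_equiv v e (e i) (H (v (e i)))
    simpa using this
  show τ (Function.update (v ∘ e) i (H ((v ∘ e) i)))
      = (τ.domDomCongr e) (Function.update v (e i) (H (v (e i))))
  rw [show (τ.domDomCongr e) (Function.update v (e i) (H (v (e i))))
      = τ ((Function.update v (e i) (H (v (e i)))) ∘ e) from rfl, hcomp]
  rfl

end HodgeAux

/-- for a symmetric endomorphism `H` of the oriented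
`n`-dimensional inner product space `V`, the derivation extension `J(H)` to
`k`-forms satisfies `⋆∘J(H) + J(H)∘⋆ = Tr(H)·⋆` as operators
`Λ^k V* → Λ^{n−k} V*`, where `⋆` is the Hodge star (characterized by
`ω ∧ ⋆η = ⟨ω,η⟩ vol`). -/
theorem hodgeStar_J_anticommutator
    (n k : ℕ) (hk : k ≤ n) [FiniteDimensional ℝ V]
    [Fact (Module.finrank ℝ V = n)]
    (o : Orientation ℝ V (Fin n)) (b : OrthonormalBasis (Fin n) ℝ V)
    (H : V →ₗ[ℝ] V) (hH : LinearMap.IsSymmetric H)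
    (Jk : (V [⋀^Fin k]→ₗ[ℝ] ℝ) →ₗ[ℝ] (V [⋀^Fin k]→ₗ[ℝ] ℝ))
    (hJk : ∀ (ω : V [⋀^Fin k]→ₗ[ℝ] ℝ) (v : Fin k → V),
      Jk ω v = ∑ i : Fin k, ω (Function.update v i (H (v i))))
    (Jnk : (V [⋀^Fin (n - k)]→ₗ[ℝ] ℝ) →ₗ[ℝ] (V [⋀^Fin (n - k)]→ₗ[ℝ] ℝ))
    (hJnk : ∀ (ω : V [⋀^Fin (n - k)]→ₗ[ℝ] ℝ) (v : Fin (n - k) → V),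
      Jnk ω v = ∑ i : Fin (n - k), ω (Function.update v i (H (v i))))
    (star : (V [⋀^Fin k]→ₗ[ℝ] ℝ) →ₗ[ℝ] (V [⋀^Fin (n - k)]→ₗ[ℝ] ℝ))
    (hstar : ∀ ω η : V [⋀^Fin k]→ₗ[ℝ] ℝ,
      (wedgeForm ω (star η)).domDomCongr (finCongr (by omega)) =
        formInner b ω η • o.volumeForm) :
    star ∘ₗ Jk + Jnk ∘ₗ star = LinearMap.trace ℝ V H • star := by
  classical
  open HodgeAux in
  have hkn : k + (n - k) = n := by omega
  set e : Fin (k + (n - k)) ≃ Fin n := finCongr hkn with he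
  set vol := o.volumeForm with hvol
  -- the volume form is nonzero at the basis
  have hvolb : vol ⇑b ≠ 0 := by
    have h1 := o.abs_volumeForm_apply_of_orthonormal b
    intro hc
    rw [← hvol, hc, abs_zero] at h1
    exact one_ne_zero h1.symm
  have smul_vol_zero : ∀ c : ℝ, c • vol = 0 → c = 0 := by
    intro c hc
    have := congrFun (congrArg DFunLike.coe hc) ⇑b
    rw [AlternatingMap.smul_apply, AlternatingMap.zero_apply, smul_eq_mul] at this
    exact (mul_eq_zero.mp this).resolve_right hvolb
  -- star is injective
  have star_inj : Function.Injective star := by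
    rw [injective_iff_map_eq_zero]
    intro η hη
    have h1 := hstar η η
    rw [hη, wedge_zero_right, AlternatingMap.domDomCongr_zero] at h1
    have h2 : formInner b η η = 0 := smul_vol_zero _ h1.symm
    exact formInner_self_eq_zero b η h2
  -- star is surjective
  haveI : FiniteDimensional ℝ (V [⋀^Fin k]→ₗ[ℝ] ℝ) := formsFinDim b
  haveI : FiniteDimensional ℝ (V [⋀^Fin (n - k)]→ₗ[ℝ] ℝ) := formsFinDim b
  have star_surj : Function.Surjective star := by
    have hfr : Module.finrank ℝ (V [⋀^Fin k]→ₗ[ℝ] ℝ)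
        = Module.finrank ℝ (V [⋀^Fin (n - k)]→ₗ[ℝ] ℝ) := by
      rw [finrank_forms b k, finrank_forms b (n - k), Nat.choose_symm hk]
    exact (LinearMap.injective_iff_surjective_of_finrank_eq_finrank hfr).mp star_inj
  -- nondegeneracy of the pairing
  have nondeg : ∀ ξ : V [⋀^Fin (n - k)]→ₗ[ℝ] ℝ,
      (∀ ω : V [⋀^Fin k]→ₗ[ℝ] ℝ, (wedgeForm ω ξ).domDomCongr e = 0) → ξ = 0 := by
    intro ξ hξ
    obtain ⟨ζ, rfl⟩ := star_surj ξ
    have h1 : ∀ ω, formInner b ω ζ = 0 := by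
      intro ω
      have := hstar ω ζ
      rw [hξ ω] at this
      exact smul_vol_zero _ this.symm
    rw [formInner_self_eq_zero b ζ (h1 ζ), map_zero]
  -- key identity
  have key : ∀ (ω : V [⋀^Fin k]→ₗ[ℝ] ℝ) (ξ : V [⋀^Fin (n - k)]→ₗ[ℝ] ℝ),
      (wedgeForm (Jk ω) ξ).domDomCongr e + (wedgeForm ω (Jnk ξ)).domDomCongr e
        = LinearMap.trace ℝ V H • (wedgeForm ω ξ).domDomCongr e := by
    intro ω ξ
    ext v
    rw [AlternatingMap.add_apply, AlternatingMap.smul_apply]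
    have h1 : ((wedgeForm (Jk ω) ξ).domDomCongr e) v = wedgeForm (Jk ω) ξ (v ∘ e) := rfl
    have h2 : ((wedgeForm ω (Jnk ξ)).domDomCongr e) v = wedgeForm ω (Jnk ξ) (v ∘ e) := rfl
    rw [h1, h2]
    rw [← wedge_leibniz H ω ξ (Jk ω) (Jnk ξ) (hJk ω) (hJnk ξ) (v ∘ e)]
    rw [← sum_update_domDomCongr H (wedgeForm ω ξ) e v]
    rw [top_form_derivation H b ((wedgeForm ω ξ).domDomCongr e) v]
    rw [smul_eq_mul]
  -- assemble
  refine LinearMap.ext fun η => ?_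
  rw [LinearMap.add_apply, LinearMap.comp_apply, LinearMap.comp_apply, LinearMap.smul_apply]
  rw [← sub_eq_zero]
  refine nondeg _ fun ω => ?_
  have expand : wedgeForm ω (star (Jk η) + Jnk (star η) - LinearMap.trace ℝ V H • star η)
      = wedgeForm ω (star (Jk η)) + wedgeForm ω (Jnk (star η))
        - LinearMap.trace ℝ V H • wedgeForm ω (star η) := by
    rw [sub_eq_add_neg, ← neg_one_smul ℝ (LinearMap.trace ℝ V H • star η)]
    rw [wedge_add_right, wedge_add_right, wedge_smul_right, wedge_smul_right, smul_smul]
    rw [neg_one_mul, neg_smul, ← sub_eq_add_neg]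
  rw [expand]
  have hdd : ∀ (A B C : V [⋀^Fin (k + (n - k))]→ₗ[ℝ] ℝ),
      (A + B - C).domDomCongr e = A.domDomCongr e + B.domDomCongr e - C.domDomCongr e := by
    intro A B C
    calc (A + B - C).domDomCongr e
        = (AlternatingMap.domDomCongrEquiv e) (A + B - C) := rfl
      _ = (AlternatingMap.domDomCongrEquiv e) (A + B)
            - (AlternatingMap.domDomCongrEquiv e) C := map_sub _ _ _
      _ = A.domDomCongr e + B.domDomCongr e - C.domDomCongr e := by
          rw [map_add]; rfl
  rw [hdd, AlternatingMap.domDomCongr_smul]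
  -- use key with ξ := star η
  have hkey := key ω (star η)
  have hJnkterm : (wedgeForm ω (Jnk (star η))).domDomCongr e
      = LinearMap.trace ℝ V H • (wedgeForm ω (star η)).domDomCongr e
        - (wedgeForm (Jk ω) (star η)).domDomCongr e := by
    rw [← hkey]; abel
  rw [hstar ω (Jk η), hJnkterm, hstar ω η, hstar (Jk ω) η]
  have hsymm : formInner b (Jk ω) η = formInner b ω (Jk η) :=
    formInner_J_symm H b hH ω η (Jk ω) (Jk η) (hJk ω) (hJk η)
  rw [hsymm]
  abel


end
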